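/- Let K be a triangle ABC in the plane with heights h_a ≤ h_b, h_c. Then inf_{O ∈ ℝ²} e_K(O) = h_a = ω_K, and moreover e_K(O) = h_a for any point O on the line through A perpendicular to BC (meeting BC at A₁) such that the angles ∠ABO and ∠ACO are both at least 90°. -/

import Mathlib

open scoped RealInnerProductSpace
open Metric Filter

/-- Width of `K` in direction `u`: distance between the two supporting
hyperplanes of `K` orthogonal to the unit vector `u`. -/
noncomputable def widthFn {n : ℕ} (K : Set (EuclideanSpace ℝ (Fin n)))
    (u : EuclideanSpace ℝ (Fin n)) : ℝ :=
  sSup ((fun x => ⟪x, u⟫) '' K) - sInf ((fun x => ⟪x, u⟫) '' K)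

/-- Diameter of `K` in direction `u`: maximal length of a chord of `K` parallel to `u`. -/
noncomputable def dirDiam {n : ℕ} (K : Set (EuclideanSpace ℝ (Fin n)))
    (u : EuclideanSpace ℝ (Fin n)) : ℝ :=
  sSup {d : ℝ | ∃ x ∈ K, ∃ y ∈ K, (∃ t : ℝ, x - y = t • u) ∧ d = dist x y}

/-- Projective spherical distance `ρ(u,v) = arccos |⟨u,v⟩|`. -/
noncomputable def rho {n : ℕ} (u v : EuclideanSpace ℝ (Fin n)) : ℝ :=
  Real.arccos |⟪u, v⟫|

/-- `e_K(O)`: maximal length of a chord of `K` cut by a line through `O`. -/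
noncomputable def eFn {n : ℕ} (K : Set (EuclideanSpace ℝ (Fin n)))
    (O : EuclideanSpace ℝ (Fin n)) : ℝ :=
  sSup {d : ℝ | ∃ x ∈ K, ∃ y ∈ K, Collinear ℝ ({O, x, y} : Set (EuclideanSpace ℝ (Fin n))) ∧
    d = dist x y}

/-- `s_K(u)`: maximal distance between a point of `K` in one supporting hyperplane
orthogonal to `u` and a point of `K` in the other. -/
noncomputable def sFn {n : ℕ} (K : Set (EuclideanSpace ℝ (Fin n)))
    (u : EuclideanSpace ℝ (Fin n)) : ℝ :=
  sSup {d : ℝ | ∃ A ∈ K, ∃ B ∈ K,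
    (∀ x ∈ K, ⟪x, u⟫ ≤ ⟪A, u⟫) ∧ (∀ x ∈ K, ⟪B, u⟫ ≤ ⟪x, u⟫) ∧ d = dist A B}

/-- `r_K(u)`: infimum over diametral chords `[AB]` for `u` and pairs of parallel
supporting hyperplanes `H₁ ∋ A`, `H₂ ∋ B` of the distance between `H₁` and `H₂`. -/
noncomputable def rFn {n : ℕ} (K : Set (EuclideanSpace ℝ (Fin n)))
    (u : EuclideanSpace ℝ (Fin n)) : ℝ :=
  sInf {d : ℝ | ∃ A ∈ K, ∃ B ∈ K, (∃ t : ℝ, A - B = t • u) ∧ dist A B = dirDiam K u ∧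
    ∃ v : EuclideanSpace ℝ (Fin n), ‖v‖ = 1 ∧
      (∀ x ∈ K, ⟪x, v⟫ ≤ ⟪A, v⟫) ∧ (∀ x ∈ K, ⟪B, v⟫ ≤ ⟪x, v⟫) ∧ d = ⟪A - B, v⟫}

section Aux
abbrev E2 := EuclideanSpace ℝ (Fin 2)

lemma inner2 (x y : E2) : ⟪x, y⟫ = x 0 * y 0 + x 1 * y 1 := by
  simp [PiLp.inner_apply, Fin.sum_univ_two, RCLike.inner_apply, mul_comm]

lemma normsq (x : E2) : ‖x‖ ^ 2 = x 0 ^ 2 + x 1 ^ 2 := by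
  rw [← real_inner_self_eq_norm_sq, inner2]; ring

lemma e2sub_apply (x y : E2) (i : Fin 2) : (x - y) i = x i - y i := rfl
lemma e2add_apply (x y : E2) (i : Fin 2) : (x + y) i = x i + y i := rfl
lemma e2smul_apply (c : ℝ) (x : E2) (i : Fin 2) : (c • x) i = c * x i := rfl

/-- 2D cross product / determinant. -/
def dt (u v : E2) : ℝ := u 0 * v 1 - u 1 * v 0

lemma eq_zero_iff (v : E2) : v = 0 ↔ v 0 = 0 ∧ v 1 = 0 := by
  constructor
  · rintro rfl; exact ⟨rfl, rfl⟩
  · rintro ⟨h0, h1⟩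
    ext i
    fin_cases i <;> assumption

lemma eq_smul_of_dt_eq_zero {u v : E2} (hv : v ≠ 0) (h : dt u v = 0) :
    ∃ t : ℝ, u = t • v := by
  have hv' : v 0 ≠ 0 ∨ v 1 ≠ 0 := by
    by_contra hc
    push_neg at hc
    exact hv ((eq_zero_iff v).2 ⟨hc.1, hc.2⟩)
  unfold dt at h
  rcases hv' with h0 | h1
  · refine ⟨u 0 / v 0, ?_⟩
    ext i
    fin_cases i <;> simp only [e2smul_apply, Fin.zero_eta, Fin.mk_one] <;> field_simp <;> nlinarith [h]
  · refine ⟨u 1 / v 1, ?_⟩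
    ext i
    fin_cases i <;> simp only [e2smul_apply, Fin.zero_eta, Fin.mk_one] <;> field_simp <;> nlinarith [h]

lemma dt_eq_zero_of_perp {u z v : E2} (hv : v ≠ 0) (hu : ⟪u, v⟫ = 0) (hz : ⟪z, v⟫ = 0) :
    dt u z = 0 := by
  rw [inner2] at hu hz
  have hv' : v 0 ≠ 0 ∨ v 1 ≠ 0 := by
    by_contra hc
    push_neg at hc
    exact hv ((eq_zero_iff v).2 ⟨hc.1, hc.2⟩)
  unfold dt
  rcases hv' with h0 | h1
  · have : (u 0 * z 1 - u 1 * z 0) * v 0 = 0 := by linear_combination z 1 * hu - u 1 * hz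
    rcases mul_eq_zero.1 this with h | h
    · exact h
    · exact absurd h h0
  · have : (u 0 * z 1 - u 1 * z 0) * v 1 = 0 := by linear_combination u 0 * hz - z 0 * hu
    rcases mul_eq_zero.1 this with h | h
    · exact h
    · exact absurd h h1

lemma distsq (x y : E2) : dist x y ^ 2 = (x 0 - y 0) ^ 2 + (x 1 - y 1) ^ 2 := by
  rw [dist_eq_norm, normsq]; simp [e2sub_apply]

lemma foot (P Q R : E2) (hne : Q ≠ R) (F : E2)
    (hF : F = Q + (⟪P - Q, R - Q⟫ / dist Q R ^ 2) • (R - Q)) :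
    ⟪P - F, R - Q⟫ = 0 ∧ F ∈ (affineSpan ℝ ({Q, R} : Set E2) : Set E2) ∧
      Metric.infDist P (affineSpan ℝ ({Q, R} : Set E2) : Set E2) = dist P F ∧
      dist P F ^ 2 * dist Q R ^ 2 = dt (P - Q) (R - Q) ^ 2 := by
  have hd0 : dist Q R ≠ 0 := dist_ne_zero.2 hne
  have hd2 : dist Q R ^ 2 ≠ 0 := pow_ne_zero _ hd0
  have hnorm : ‖R - Q‖ ^ 2 = dist Q R ^ 2 := by
    rw [← dist_eq_norm, dist_comm]
  have horth : ⟪P - F, R - Q⟫ = 0 := by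
    rw [hF]
    have : P - (Q + (⟪P - Q, R - Q⟫ / dist Q R ^ 2) • (R - Q)) =
        (P - Q) - (⟪P - Q, R - Q⟫ / dist Q R ^ 2) • (R - Q) := by abel
    rw [this, inner_sub_left, real_inner_smul_left, real_inner_self_eq_norm_sq, hnorm]
    field_simp
    ring
  have hmem : F ∈ (affineSpan ℝ ({Q, R} : Set E2) : Set E2) := by
    rw [hF]
    have := smul_vsub_vadd_mem_affineSpan_pair (⟪P - Q, R - Q⟫ / dist Q R ^ 2) Q R
    simpa [vsub_eq_sub, vadd_eq_add, add_comm] using this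
  refine ⟨horth, hmem, ?_, ?_⟩
  · refine le_antisymm (Metric.infDist_le_dist_of_mem hmem) ?_
    by_contra hcon
    push_neg at hcon
    obtain ⟨y, hy, hlt⟩ := (Metric.infDist_lt_iff ⟨F, hmem⟩).1 hcon
    have hy' : (y - Q) +ᵥ Q ∈ line[ℝ, Q, R] := by
      simpa [vadd_eq_add, sub_add_cancel] using hy
    obtain ⟨r, hr⟩ := vadd_left_mem_affineSpan_pair.1 hy'
    rw [vsub_eq_sub] at hr
    have hy2 : y = r • (R - Q) + Q := eq_add_of_sub_eq hr.symm
    have hFy : F - y = (⟪P - Q, R - Q⟫ / dist Q R ^ 2 - r) • (R - Q) := by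
      rw [hF, hy2, sub_smul]
      abel
    have hperp : ⟪P - F, F - y⟫ = 0 := by
      rw [hFy, real_inner_smul_right, horth, mul_zero]
    have hsq : dist P y ^ 2 = dist P F ^ 2 + dist F y ^ 2 := by
      have h1 : P - y = (P - F) + (F - y) := by abel
      rw [dist_eq_norm, dist_eq_norm, dist_eq_norm, h1, norm_add_sq_real, hperp]
      ring
    nlinarith [dist_nonneg (x := P) (y := y), dist_nonneg (x := P) (y := F),
      dist_nonneg (x := F) (y := y), hlt, hsq]
  · rw [distsq] at hd2
    rw [hF, distsq, distsq]
    simp only [e2sub_apply, e2add_apply, e2smul_apply, inner2, dt]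
    field_simp
    ring

lemma chord_aux (O P Q R : E2) (K : Set E2) (hP : P ∈ K) (hseg : segment ℝ Q R ⊆ K)
    (hd : dt (Q - O) (P - O) * dt (R - O) (P - O) ≤ 0) :
    ∃ x ∈ K, ∃ y ∈ K, Collinear ℝ ({O, x, y} : Set E2) ∧
      Metric.infDist P (affineSpan ℝ ({Q, R} : Set E2) : Set E2) ≤ dist x y := by
  by_cases hPO : P = O
  · refine ⟨P, hP, Q, hseg (left_mem_segment ℝ Q R), ?_,
      Metric.infDist_le_dist_of_mem (left_mem_affineSpan_pair ℝ Q R)⟩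
    subst hPO
    simpa [Set.insert_idem] using collinear_pair ℝ P Q
  · have key : ∃ t : ℝ, 0 ≤ t ∧ t ≤ 1 ∧
        (1 - t) * dt (Q - O) (P - O) + t * dt (R - O) (P - O) = 0 := by
      rcases eq_or_ne (dt (Q - O) (P - O)) 0 with h0 | h0
      · exact ⟨0, le_refl _, zero_le_one, by rw [h0]; ring⟩
      rcases eq_or_ne (dt (R - O) (P - O)) 0 with h1 | h1
      · exact ⟨1, zero_le_one, le_refl _, by rw [h1]; ring⟩
      have hlt : dt (Q - O) (P - O) * dt (R - O) (P - O) < 0 :=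
        lt_of_le_of_ne hd (mul_ne_zero h0 h1)
      rcases lt_or_gt_of_ne h0 with hB | hB
      · have hC : 0 < dt (R - O) (P - O) := by nlinarith
        have hden : dt (R - O) (P - O) - dt (Q - O) (P - O) ≠ 0 := ne_of_gt (by linarith)
        have hmul : (-(dt (Q - O) (P - O))) / (dt (R - O) (P - O) - dt (Q - O) (P - O)) *
            (dt (R - O) (P - O) - dt (Q - O) (P - O)) = -(dt (Q - O) (P - O)) :=
          div_mul_cancel₀ _ hden
        refine ⟨(-(dt (Q - O) (P - O))) / (dt (R - O) (P - O) - dt (Q - O) (P - O)),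
          div_nonneg (by linarith) (by linarith), ?_, by linear_combination hmul⟩
        rw [div_le_one (by linarith)]; linarith
      · have hC : dt (R - O) (P - O) < 0 := by nlinarith
        have hden : dt (Q - O) (P - O) - dt (R - O) (P - O) ≠ 0 := ne_of_gt (by linarith)
        have hmul : (dt (Q - O) (P - O)) / (dt (Q - O) (P - O) - dt (R - O) (P - O)) *
            (dt (Q - O) (P - O) - dt (R - O) (P - O)) = dt (Q - O) (P - O) :=
          div_mul_cancel₀ _ hden
        refine ⟨(dt (Q - O) (P - O)) / (dt (Q - O) (P - O) - dt (R - O) (P - O)),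
          div_nonneg (by linarith) (by linarith), ?_, by linear_combination -hmul⟩
        rw [div_le_one (by linarith)]; linarith
    obtain ⟨t, ht0, ht1, hteq⟩ := key
    set D : E2 := Q + t • (R - Q) with hD
    have hDseg : D ∈ segment ℝ Q R := by
      rw [segment_eq_image']
      exact ⟨t, ⟨ht0, ht1⟩, rfl⟩
    have hDspan : D ∈ (affineSpan ℝ ({Q, R} : Set E2) : Set E2) := by
      have := smul_vsub_vadd_mem_affineSpan_pair t Q R
      simpa [vsub_eq_sub, vadd_eq_add, add_comm] using this
    have hdt : dt (D - O) (P - O) = 0 := by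
      have hexp : dt (D - O) (P - O) =
          (1 - t) * dt (Q - O) (P - O) + t * dt (R - O) (P - O) := by
        simp only [dt, hD, e2sub_apply, e2add_apply, e2smul_apply]
        ring
      rw [hexp, hteq]
    have hvne : P - O ≠ 0 := sub_ne_zero.2 hPO
    obtain ⟨s, hs⟩ := eq_smul_of_dt_eq_zero hvne hdt
    have hDline : D ∈ line[ℝ, O, P] := by
      have : (D - O) +ᵥ O ∈ line[ℝ, O, P] :=
        vadd_left_mem_affineSpan_pair.2 ⟨s, by rw [vsub_eq_sub]; exact hs.symm⟩
      simpa [vadd_eq_add, sub_add_cancel] using this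
    have hcol : Collinear ℝ ({O, P, D} : Set E2) := by
      have h1 : Collinear ℝ ({D, O, P} : Set E2) :=
        collinear_insert_of_mem_affineSpan_pair hDline
      refine h1.subset ?_
      intro z hz
      simp only [Set.mem_insert_iff, Set.mem_singleton_iff] at hz ⊢
      tauto
    exact ⟨P, hP, D, hseg hDseg, hcol, Metric.infDist_le_dist_of_mem hDspan⟩

lemma width_ineq {w a β γ μ ν : ℝ} (hw : 0 ≤ w) (ha : 0 ≤ a)
    (hβ : |β| ≤ w) (hγ : |γ| ≤ w) (hβγ : |β - γ| ≤ w)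
    (hμ : |μ| ≤ a) (hν : |ν| ≤ a) (hμν : |μ - ν| ≤ a) :
    β * ν - γ * μ ≤ w * a := by
  rw [abs_le] at hβ hγ hβγ hμ hν hμν
  rcases le_or_gt 0 μ with h1 | h1 <;> rcases le_or_gt 0 ν with h2 | h2
  · -- μ ≥ 0, ν ≥ 0
    rcases le_total μ ν with h3 | h3
    · nlinarith [mul_le_mul_of_nonneg_right hβ.2 (sub_nonneg.2 h3),
        mul_le_mul_of_nonneg_right hβγ.2 h1, mul_le_mul_of_nonneg_left hν.2 hw]
    · nlinarith [mul_le_mul_of_nonneg_right hβγ.2 h2,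
        mul_nonneg (by linarith [hγ.1] : (0:ℝ) ≤ w + γ) (sub_nonneg.2 h3),
        mul_le_mul_of_nonneg_left hμ.2 hw]
  · -- μ ≥ 0, ν < 0
    nlinarith [mul_nonneg (by linarith [hβ.1] : (0:ℝ) ≤ β + w) (by linarith : (0:ℝ) ≤ -ν),
      mul_nonneg (by linarith [hγ.1] : (0:ℝ) ≤ w + γ) h1,
      mul_le_mul_of_nonneg_left hμν.2 hw]
  · -- μ < 0, ν ≥ 0
    nlinarith [mul_le_mul_of_nonneg_right hβ.2 h2,
      mul_nonneg (sub_nonneg.2 hγ.2) (by linarith : (0:ℝ) ≤ -μ),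
      mul_le_mul_of_nonneg_left (by linarith [hμν.1] : ν - μ ≤ a) hw]
  · -- μ < 0, ν < 0
    rcases le_total μ ν with h3 | h3
    · nlinarith [mul_le_mul_of_nonneg_right (by linarith [hβγ.1] : γ - β ≤ w)
        (by linarith : (0:ℝ) ≤ -ν),
        mul_nonneg (sub_nonneg.2 hγ.2) (sub_nonneg.2 h3),
        mul_le_mul_of_nonneg_left (by linarith [hμ.1] : -μ ≤ a) hw]
    · nlinarith [mul_nonneg (by linarith [hβ.1] : (0:ℝ) ≤ w + β) (by linarith : (0:ℝ) ≤ -ν + μ),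
        mul_nonneg (by linarith [hβγ.1] : (0:ℝ) ≤ w - (γ - β)) (by linarith : (0:ℝ) ≤ -μ),
        mul_le_mul_of_nonneg_left (by linarith [hν.1] : -ν ≤ a) hw]

lemma three_neg {p q r : ℝ} (h1 : p * r < 0) (h2 : p * q < 0) (h3 : q * r < 0) : False := by
  nlinarith [mul_pos (mul_pos (neg_pos.2 h1) (neg_pos.2 h2)) (neg_pos.2 h3), sq_nonneg (p * q * r)]

lemma sq_le_imp {x m : ℝ} (hx : 0 ≤ x) (hm : 0 ≤ m) (h : x ^ 2 ≤ m ^ 2) : x ≤ m := by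
  nlinarith

lemma tau_pos {tA a τ δ : ℝ} (ha : 0 < a) (hδ : 0 < δ) (h1 : tA ^ 2 * a ^ 2 ≤ τ * δ)
    (h2 : (1 - tA) ^ 2 * a ^ 2 ≤ τ * δ) : 0 < τ := by
  nlinarith [sq_nonneg (1 - 2 * tA), mul_pos ha ha]

lemma prod_pos {rx ry w τ : ℝ} (hτ : 0 < τ) (h1 : τ ≤ rx * w) (h2 : τ ≤ ry * w) :
    0 < rx * ry := by
  nlinarith [mul_pos (lt_of_lt_of_le hτ h1) (lt_of_lt_of_le hτ h2), sq_nonneg w]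

lemma area_le {δ a w D : ℝ} (hδ : 0 < δ) (ha : 0 < a) (hw : 0 ≤ w)
    (hsq : (δ * a) ^ 2 = D ^ 2) (hD : |D| ≤ w * a) : δ ≤ w := by
  have h1 : D ^ 2 ≤ (w * a) ^ 2 := by nlinarith [abs_nonneg D, sq_abs D]
  have h2 : δ * a ≤ w * a := by nlinarith [mul_pos hδ ha, mul_nonneg hw ha.le]
  exact le_of_mul_le_mul_right h2 ha

lemma angle_ge_imp_inner_nonpos {X Y Z : E2} (hne : X ≠ Y)
    (h : Real.pi / 2 ≤ EuclideanGeometry.angle X Y Z) : ⟪X - Y, Z - Y⟫ ≤ 0 := by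
  by_contra hpos
  push_neg at hpos
  have hZY : Z - Y ≠ 0 := by
    intro he
    rw [he, inner_zero_right] at hpos
    exact lt_irrefl _ hpos
  have hXY : X - Y ≠ 0 := sub_ne_zero.2 hne
  have h1 : 0 < ⟪X - Y, Z - Y⟫ / (‖X - Y‖ * ‖Z - Y‖) :=
    div_pos hpos (mul_pos (norm_pos_iff.2 hXY) (norm_pos_iff.2 hZY))
  have h2 : EuclideanGeometry.angle X Y Z < Real.pi / 2 := by
    simp only [EuclideanGeometry.angle, InnerProductGeometry.angle, vsub_eq_sub]
    exact Real.arccos_lt_pi_div_two.2 h1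
  linarith


end Aux

set_option maxHeartbeats 4000000 in
theorem triangle_eFn_inf (A B C : EuclideanSpace ℝ (Fin 2))
    (hind : AffineIndependent ℝ ![A, B, C])
    (hab : Metric.infDist A (affineSpan ℝ {B, C} : Set (EuclideanSpace ℝ (Fin 2))) ≤
      Metric.infDist B (affineSpan ℝ {A, C} : Set (EuclideanSpace ℝ (Fin 2))))
    (hac : Metric.infDist A (affineSpan ℝ {B, C} : Set (EuclideanSpace ℝ (Fin 2))) ≤
      Metric.infDist C (affineSpan ℝ {A, B} : Set (EuclideanSpace ℝ (Fin 2)))) :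
    (⨅ O : EuclideanSpace ℝ (Fin 2), eFn (convexHull ℝ {A, B, C}) O) =
      Metric.infDist A (affineSpan ℝ {B, C} : Set (EuclideanSpace ℝ (Fin 2))) ∧
    (⨅ u : sphere (0 : EuclideanSpace ℝ (Fin 2)) 1, widthFn (convexHull ℝ {A, B, C}) u) =
      Metric.infDist A (affineSpan ℝ {B, C} : Set (EuclideanSpace ℝ (Fin 2))) ∧
    (∀ O : EuclideanSpace ℝ (Fin 2), ⟪O - A, C - B⟫ = 0 →
      Real.pi / 2 ≤ EuclideanGeometry.angle A B O →
      Real.pi / 2 ≤ EuclideanGeometry.angle A C O →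
      eFn (convexHull ℝ {A, B, C}) O =
        Metric.infDist A (affineSpan ℝ {B, C} : Set (EuclideanSpace ℝ (Fin 2)))) := by
  classical
  -- basic nondegeneracy
  have hABne : A ≠ B := by
    have := hind.injective.ne (show (0 : Fin 3) ≠ 1 by decide)
    simpa using this
  have hACne : A ≠ C := by
    have := hind.injective.ne (show (0 : Fin 3) ≠ 2 by decide)
    simpa using this
  have hBCne : B ≠ C := by
    have := hind.injective.ne (show (1 : Fin 3) ≠ 2 by decide)
    simpa using this
  have hnotcol : ¬ Collinear ℝ ({A, B, C} : Set E2) :=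
    affineIndependent_iff_not_collinear_set.1 hind
  obtain ⟨K, hKdef⟩ : ∃ s : Set E2, s = convexHull ℝ ({A, B, C} : Set E2) := ⟨_, rfl⟩
  obtain ⟨δ, hδdef⟩ : ∃ x : ℝ,
      x = Metric.infDist A (affineSpan ℝ ({B, C} : Set E2) : Set E2) := ⟨_, rfl⟩
  rw [← hδdef] at hab hac
  rw [← hKdef, ← hδdef]
  -- side lengths
  obtain ⟨a, hadef⟩ : ∃ x : ℝ, x = dist B C := ⟨_, rfl⟩
  obtain ⟨b, hbdef⟩ : ∃ x : ℝ, x = dist A C := ⟨_, rfl⟩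
  obtain ⟨c, hcdef⟩ : ∃ x : ℝ, x = dist A B := ⟨_, rfl⟩
  have ha0 : 0 < a := hadef ▸ dist_pos.2 hBCne
  have hb0 : 0 < b := hbdef ▸ dist_pos.2 hACne
  have hc0 : 0 < c := hcdef ▸ dist_pos.2 hABne
  -- feet of altitudes
  obtain ⟨tA, htAdef⟩ : ∃ t : ℝ, t = ⟪A - B, C - B⟫ / a ^ 2 := ⟨_, rfl⟩
  obtain ⟨A₁, hA₁def⟩ : ∃ p : E2, p = B + tA • (C - B) := ⟨_, rfl⟩
  obtain ⟨hA₁orth, hA₁mem, hA₁dist, hA₁sq⟩ := foot A B C hBCne A₁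
    (by rw [hA₁def, htAdef, hadef])
  obtain ⟨B₁, hB₁def⟩ : ∃ p : E2,
      p = A + (⟪B - A, C - A⟫ / dist A C ^ 2) • (C - A) := ⟨_, rfl⟩
  obtain ⟨-, -, hB₁dist, hB₁sq⟩ := foot B A C hACne B₁ hB₁def
  obtain ⟨C₁, hC₁def⟩ : ∃ p : E2,
      p = A + (⟪C - A, B - A⟫ / dist A B ^ 2) • (B - A) := ⟨_, rfl⟩
  obtain ⟨-, -, hC₁dist, hC₁sq⟩ := foot C A B hABne C₁ hC₁def
  rw [← hadef] at hA₁sq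
  rw [← hbdef] at hB₁sq
  rw [← hcdef] at hC₁sq
  rw [← hδdef] at hA₁dist
  have hAnot : A ∉ (affineSpan ℝ ({B, C} : Set E2) : Set E2) := fun hmem =>
    hnotcol (collinear_insert_of_mem_affineSpan_pair hmem)
  have hδdist : δ = dist A A₁ := hA₁dist
  have hδpos : 0 < δ := by
    rw [hδdist]
    exact dist_pos.2 (fun he => hAnot (he ▸ hA₁mem))
  -- squared area identities
  have hsqeq1 : dt (A - B) (C - B) ^ 2 = dt (B - A) (C - A) ^ 2 := by
    simp only [dt, e2sub_apply]; ring
  have hsqeq2 : dt (A - B) (C - B) ^ 2 = dt (C - A) (B - A) ^ 2 := by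
    simp only [dt, e2sub_apply]; ring
  have hδa : δ ^ 2 * a ^ 2 = dt (A - B) (C - B) ^ 2 := by
    rw [hδdist]; exact hA₁sq
  -- longest side
  have hba : b ≤ a := by
    have e1 : Metric.infDist B (affineSpan ℝ ({A, C} : Set E2) : Set E2) ^ 2 * b ^ 2
        = dt (A - B) (C - B) ^ 2 := by rw [hB₁dist, hsqeq1]; exact hB₁sq
    by_contra hcon
    push_neg at hcon
    have h2 : δ ^ 2 ≤ Metric.infDist B (affineSpan ℝ ({A, C} : Set E2) : Set E2) ^ 2 :=
      pow_le_pow_left₀ hδpos.le hab 2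
    have h3 : δ ^ 2 * a ^ 2 < δ ^ 2 * b ^ 2 :=
      mul_lt_mul_of_pos_left (pow_lt_pow_left₀ hcon ha0.le (by norm_num))
        (by positivity)
    have h4 := mul_le_mul_of_nonneg_right h2 (sq_nonneg b)
    linarith only [e1, hδa, h3, h4]
  have hca : c ≤ a := by
    have e1 : Metric.infDist C (affineSpan ℝ ({A, B} : Set E2) : Set E2) ^ 2 * c ^ 2
        = dt (A - B) (C - B) ^ 2 := by rw [hC₁dist, hsqeq2]; exact hC₁sq
    by_contra hcon
    push_neg at hcon
    have h2 : δ ^ 2 ≤ Metric.infDist C (affineSpan ℝ ({A, B} : Set E2) : Set E2) ^ 2 :=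
      pow_le_pow_left₀ hδpos.le hac 2
    have h3 : δ ^ 2 * a ^ 2 < δ ^ 2 * c ^ 2 :=
      mul_lt_mul_of_pos_left (pow_lt_pow_left₀ hcon ha0.le (by norm_num))
        (by positivity)
    have h4 := mul_le_mul_of_nonneg_right h2 (sq_nonneg c)
    linarith only [e1, hδa, h3, h4]
  -- inner products and tA bounds
  have hlaw : ⟪A - B, C - B⟫ = (a ^ 2 + c ^ 2 - b ^ 2) / 2 := by
    have h1 : A - C = (A - B) - (C - B) := by abel
    have h2 : dist A C ^ 2 = ‖A - B‖ ^ 2 - 2 * ⟪A - B, C - B⟫ + ‖C - B‖ ^ 2 := by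
      rw [dist_eq_norm, h1, norm_sub_sq_real]
    have h3 : ‖A - B‖ = c := by rw [hcdef, dist_eq_norm]
    have h4 : ‖C - B‖ = a := by rw [hadef, dist_eq_norm, norm_sub_rev]
    rw [h3, h4] at h2
    rw [← hbdef] at h2
    linarith
  have hinnertA : ⟪A - B, C - B⟫ = tA * a ^ 2 := by
    rw [htAdef]
    field_simp
  have ha2pos : 0 < a ^ 2 := by positivity
  have htA0 : 0 ≤ tA := by
    have h5 : 0 ≤ tA * a ^ 2 := by
      rw [← hinnertA, hlaw]
      have h6 : b ^ 2 ≤ a ^ 2 := pow_le_pow_left₀ hb0.le hba 2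
      have h7 : 0 < c ^ 2 := by positivity
      linarith only [h6, h7]
    by_contra h8
    push_neg at h8
    have := mul_neg_of_neg_of_pos h8 ha2pos
    linarith only [h5, this]
  have htA1 : tA ≤ 1 := by
    have h5 : tA * a ^ 2 ≤ 1 * a ^ 2 := by
      rw [← hinnertA, hlaw]
      have h6 : c ^ 2 ≤ a ^ 2 := pow_le_pow_left₀ hc0.le hca 2
      have h7 : 0 < b ^ 2 := by positivity
      linarith only [h6, h7]
    exact le_of_mul_le_mul_right h5 ha2pos
  have hnormCB : ‖C - B‖ = a := by rw [hadef, dist_comm B C, dist_eq_norm]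
  have hinnerACCB : ⟪A - C, C - B⟫ = tA * a ^ 2 - a ^ 2 := by
    have h1 : A - C = (A - B) - (C - B) := by abel
    rw [h1, inner_sub_left, hinnertA, real_inner_self_eq_norm_sq, hnormCB]
  -- the unit normal
  obtain ⟨ν, hνdef⟩ : ∃ p : E2, p = δ⁻¹ • (A - A₁) := ⟨_, rfl⟩
  have hAA₁ : A - A₁ = δ • ν := by
    rw [hνdef, smul_smul, mul_inv_cancel₀ (ne_of_gt hδpos), one_smul]
  have hnormAA₁ : ‖A - A₁‖ = δ := by rw [← dist_eq_norm, ← hδdist]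
  have hνnorm : ‖ν‖ = 1 := by
    rw [hνdef, norm_smul, hnormAA₁, Real.norm_eq_abs, abs_of_pos (inv_pos.2 hδpos),
      inv_mul_cancel₀ (ne_of_gt hδpos)]
  have hνne : ν ≠ 0 := by
    intro he
    rw [he, norm_zero] at hνnorm
    norm_num at hνnorm
  have hCBne : C - B ≠ 0 := sub_ne_zero.2 (Ne.symm hBCne)
  have hνCB : ⟪ν, C - B⟫ = 0 := by
    rw [hνdef, real_inner_smul_left, hA₁orth, mul_zero]
  have hννinner : ⟪ν, ν⟫ = 1 := by
    rw [real_inner_self_eq_norm_sq, hνnorm]; norm_num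
  have hAA₁ν : ⟪A - A₁, ν⟫ = δ := by
    rw [hAA₁, real_inner_smul_left, hννinner, mul_one]
  have hCBν : ⟪C - B, ν⟫ = 0 := by rw [real_inner_comm]; exact hνCB
  have hABν : ⟪A - B, ν⟫ = δ := by
    have h1 : A - B = (A - A₁) + tA • (C - B) := by rw [hA₁def]; abel
    rw [h1, inner_add_left, real_inner_smul_left, hAA₁ν, hCBν, mul_zero, add_zero]
  have hACν : ⟪A - C, ν⟫ = δ := by
    have h1 : A - C = (A - A₁) + tA • (C - B) - (C - B) := by rw [hA₁def]; abel
    rw [h1, inner_sub_left, inner_add_left, real_inner_smul_left, hAA₁ν, hCBν,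
      mul_zero, add_zero, sub_zero]
  -- membership facts
  have hAK : A ∈ K := by rw [hKdef]; exact subset_convexHull ℝ _ (by simp)
  have hBK : B ∈ K := by rw [hKdef]; exact subset_convexHull ℝ _ (by simp)
  have hCK : C ∈ K := by rw [hKdef]; exact subset_convexHull ℝ _ (by simp)
  have hconvK : Convex ℝ K := hKdef ▸ convex_convexHull ℝ _
  have hsegBC : segment ℝ B C ⊆ K := hconvK.segment_subset hBK hCK
  have hsegAC : segment ℝ A C ⊆ K := hconvK.segment_subset hAK hCK
  have hsegAB : segment ℝ A B ⊆ K := hconvK.segment_subset hAK hBK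
  have hA₁K : A₁ ∈ K := by
    apply hsegBC
    rw [segment_eq_image']
    exact ⟨tA, ⟨htA0, htA1⟩, hA₁def.symm⟩
  -- boundedness of chord set
  set R : ℝ := max (dist B A) (dist C A) with hRdef
  have hR0 : 0 ≤ R := le_trans dist_nonneg (le_max_left _ _)
  have hball : K ⊆ closedBall A R := by
    rw [hKdef]
    apply convexHull_min ?_ (convex_closedBall _ _)
    intro z hz
    simp only [Set.mem_insert_iff, Set.mem_singleton_iff] at hz
    rw [mem_closedBall]
    rcases hz with h | h | h <;> rw [h]
    · simpa using hR0
    · exact le_max_left _ _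
    · exact le_max_right _ _
  have hbdd : ∀ O : E2, BddAbove {d : ℝ | ∃ x ∈ K, ∃ y ∈ K,
      Collinear ℝ ({O, x, y} : Set E2) ∧ d = dist x y} := by
    intro O
    refine ⟨2 * R, ?_⟩
    rintro d ⟨x, hx, y, hy, -, rfl⟩
    have h1 : dist x A ≤ R := hball hx
    have h2 : dist y A ≤ R := hball hy
    calc dist x y ≤ dist x A + dist A y := dist_triangle x A y
      _ ≤ R + R := add_le_add h1 (by rwa [dist_comm])
      _ = 2 * R := by ring
  have heFn : ∀ O : E2, eFn K O = sSup {d : ℝ | ∃ x ∈ K, ∃ y ∈ K,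
      Collinear ℝ ({O, x, y} : Set E2) ∧ d = dist x y} := fun O => rfl
  -- lower bound for eFn
  have lb : ∀ O : E2, δ ≤ eFn K O := by
    intro O
    have main : ∃ x ∈ K, ∃ y ∈ K, Collinear ℝ ({O, x, y} : Set E2) ∧ δ ≤ dist x y := by
      rcases le_or_gt 0 (dt (A - O) (B - O) * dt (C - O) (A - O)) with hpr | hpr
      · have hd : dt (B - O) (A - O) * dt (C - O) (A - O) ≤ 0 := by
          have e : dt (B - O) (A - O) = - dt (A - O) (B - O) := by
            simp only [dt, e2sub_apply]; ring
          rw [e, neg_mul]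
          linarith only [hpr]
        obtain ⟨x, hx, y, hy, hcol, hle⟩ := chord_aux O A B C K hAK hsegBC hd
        exact ⟨x, hx, y, hy, hcol, le_trans (le_of_eq hδdef) hle⟩
      rcases le_or_gt 0 (dt (A - O) (B - O) * dt (B - O) (C - O)) with hpq | hpq
      · have hd : dt (A - O) (B - O) * dt (C - O) (B - O) ≤ 0 := by
          have e : dt (C - O) (B - O) = - dt (B - O) (C - O) := by
            simp only [dt, e2sub_apply]; ring
          rw [e, mul_neg]
          linarith only [hpq]
        obtain ⟨x, hx, y, hy, hcol, hle⟩ := chord_aux O B A C K hBK hsegAC hd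
        exact ⟨x, hx, y, hy, hcol, le_trans hab hle⟩
      rcases le_or_gt 0 (dt (B - O) (C - O) * dt (C - O) (A - O)) with hqr | hqr
      · have hd : dt (A - O) (C - O) * dt (B - O) (C - O) ≤ 0 := by
          have e : dt (A - O) (C - O) = - dt (C - O) (A - O) := by
            simp only [dt, e2sub_apply]; ring
          rw [e, neg_mul]
          have : dt (C - O) (A - O) * dt (B - O) (C - O)
              = dt (B - O) (C - O) * dt (C - O) (A - O) := mul_comm _ _
          linarith only [hqr, this]
        obtain ⟨x, hx, y, hy, hcol, hle⟩ := chord_aux O C A B K hCK hsegAB hd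
        exact ⟨x, hx, y, hy, hcol, le_trans hac hle⟩
      · exact (three_neg hpr hpq hqr).elim
    obtain ⟨x, hx, y, hy, hcol, hle⟩ := main
    rw [heFn O]
    exact le_trans hle (le_csSup (hbdd O) ⟨x, hx, y, hy, hcol, rfl⟩)
  -- key upper-bound lemma (part 3 core)
  have key : ∀ O : E2, ⟪O - A, C - B⟫ = 0 → ⟪A - B, O - B⟫ ≤ 0 → ⟪A - C, O - C⟫ ≤ 0 →
      eFn K O = δ := by
    intro O hO hBO hCO
    have hOA₁perp : ⟪O - A₁, C - B⟫ = 0 := by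
      have h1 : O - A₁ = (O - A) + (A - A₁) := by abel
      rw [h1, inner_add_left, hO, hA₁orth, add_zero]
    have hdt0 : dt (O - A₁) ν = 0 := dt_eq_zero_of_perp hCBne hOA₁perp hνCB
    obtain ⟨t, ht⟩ := eq_smul_of_dt_eq_zero hνne hdt0
    obtain ⟨τ, hτdef⟩ : ∃ x : ℝ, x = -t := ⟨_, rfl⟩
    have hOdef : O = A₁ - τ • ν := by
      rw [hτdef, neg_smul, sub_neg_eq_add, ← ht]
      abel
    have hOB : O - B = tA • (C - B) - τ • ν := by rw [hOdef, hA₁def]; abel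
    have hABOB : ⟪A - B, O - B⟫ = tA * (tA * a ^ 2) - τ * δ := by
      rw [hOB, inner_sub_right, real_inner_smul_right, real_inner_smul_right,
        hinnertA, hABν]
    have h1 : tA ^ 2 * a ^ 2 ≤ τ * δ := by linarith only [hBO, hABOB]
    have hOC : O - C = (tA • (C - B) - (C - B)) - τ • ν := by rw [hOdef, hA₁def]; abel
    have hACOC : ⟪A - C, O - C⟫ =
        (tA * (tA * a ^ 2 - a ^ 2) - (tA * a ^ 2 - a ^ 2)) - τ * δ := by
      rw [hOC, inner_sub_right, inner_sub_right, real_inner_smul_right, real_inner_smul_right,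
        hinnerACCB, hACν]
    have h2 : (1 - tA) ^ 2 * a ^ 2 ≤ τ * δ := by linarith only [hCO, hACOC]
    have hτpos : 0 < τ := tau_pos ha0 hδpos h1 h2
    -- distances from O to the vertices
    have hA₁A : A₁ = A - δ • ν := by rw [← hAA₁]; abel
    have hOA : O - A = -((τ + δ) • ν) := by
      have h3 : O - A = (A₁ - A) - τ • ν := by rw [hOdef]; abel
      have e : A₁ - A = -(δ • ν) := by rw [hA₁A]; abel
      rw [h3, e, add_smul]
      abel
    have hdistOA : dist O A = τ + δ := by
      rw [dist_eq_norm, hOA, norm_neg, norm_smul, hνnorm, mul_one, Real.norm_eq_abs,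
        abs_of_pos (by linarith)]
    have hdistOB : dist O B ≤ τ + δ := by
      have e1 : ‖tA • (C - B)‖ ^ 2 = tA ^ 2 * a ^ 2 := by
        rw [norm_smul, Real.norm_eq_abs, hnormCB, mul_pow, sq_abs]
      have e2 : ‖τ • ν‖ ^ 2 = τ ^ 2 := by
        rw [norm_smul, Real.norm_eq_abs, hνnorm, mul_one, sq_abs]
      have e3 : ⟪tA • (C - B), τ • ν⟫ = 0 := by
        rw [real_inner_smul_left, real_inner_smul_right, hCBν]; ring
      have hsq : ‖O - B‖ ^ 2 = tA ^ 2 * a ^ 2 + τ ^ 2 := by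
        rw [hOB, norm_sub_sq_real, e1, e2, e3]; ring
      have h4 : ‖O - B‖ ^ 2 ≤ (τ + δ) ^ 2 := by
        have h5 := mul_pos hτpos hδpos
        have h6 := sq_nonneg δ
        linarith only [h1, hsq, h5, h6]
      rw [dist_eq_norm]
      exact sq_le_imp (norm_nonneg _) (by linarith only [hτpos, hδpos]) h4
    have hdistOC : dist O C ≤ τ + δ := by
      have e0 : tA • (C - B) - (C - B) = (tA - 1) • (C - B) := by
        rw [sub_smul, one_smul]
      have e1 : ‖(tA - 1) • (C - B)‖ ^ 2 = (tA - 1) ^ 2 * a ^ 2 := by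
        rw [norm_smul, Real.norm_eq_abs, hnormCB, mul_pow, sq_abs]
      have e2 : ‖τ • ν‖ ^ 2 = τ ^ 2 := by
        rw [norm_smul, Real.norm_eq_abs, hνnorm, mul_one, sq_abs]
      have e3 : ⟪(tA - 1) • (C - B), τ • ν⟫ = 0 := by
        rw [real_inner_smul_left, real_inner_smul_right, hCBν]; ring
      have hsq : ‖O - C‖ ^ 2 = (tA - 1) ^ 2 * a ^ 2 + τ ^ 2 := by
        rw [hOC, e0, norm_sub_sq_real, e1, e2, e3]; ring
      have h4 : ‖O - C‖ ^ 2 ≤ (τ + δ) ^ 2 := by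
        have h5 := mul_pos hτpos hδpos
        have h6 := sq_nonneg δ
        linarith only [h2, hsq, h5, h6]
      rw [dist_eq_norm]
      exact sq_le_imp (norm_nonneg _) (by linarith only [hτpos, hδpos]) h4
    have hKball : K ⊆ closedBall O (τ + δ) := by
      rw [hKdef]
      apply convexHull_min ?_ (convex_closedBall _ _)
      intro z hz
      simp only [Set.mem_insert_iff, Set.mem_singleton_iff] at hz
      rw [mem_closedBall]
      rcases hz with h | h | h <;> rw [h, dist_comm]
      · exact le_of_eq hdistOA
      · exact hdistOB
      · exact hdistOC
    have hKhalf : ∀ x ∈ K, 0 ≤ ⟪x - A₁, ν⟫ := by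
      have hsub : K ⊆ {x : E2 | 0 ≤ ⟪x - A₁, ν⟫} := by
        rw [hKdef]
        have hlin : IsLinearMap ℝ (fun x : E2 => ⟪x, ν⟫) :=
          ⟨fun p q => inner_add_left p q ν, fun r p => real_inner_smul_left p ν r⟩
        have hseteq : {x : E2 | 0 ≤ ⟪x - A₁, ν⟫} = {x : E2 | ⟪A₁, ν⟫ ≤ ⟪x, ν⟫} := by
          ext p
          simp only [Set.mem_setOf_eq, inner_sub_left, sub_nonneg]
        rw [hseteq]
        apply convexHull_min ?_ (convex_halfSpace_ge hlin _)
        intro z hz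
        simp only [Set.mem_insert_iff, Set.mem_singleton_iff] at hz
        rcases hz with h | h | h <;> rw [h] <;> simp only [Set.mem_setOf_eq]
        · have h9 := hAA₁ν
          rw [inner_sub_left] at h9
          linarith only [h9, hδpos]
        · have e : B - A₁ = -(tA • (C - B)) := by rw [hA₁def]; abel
          have h9 : ⟪B - A₁, ν⟫ = 0 := by
            rw [e, inner_neg_left, real_inner_smul_left, hCBν, mul_zero, neg_zero]
          rw [inner_sub_left] at h9
          linarith only [h9]
        · have e : C - A₁ = (C - B) - tA • (C - B) := by rw [hA₁def]; abel
          have h9 : ⟪C - A₁, ν⟫ = 0 := by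
            rw [e, inner_sub_left, real_inner_smul_left, hCBν, mul_zero, sub_zero]
          rw [inner_sub_left] at h9
          linarith only [h9]
      exact fun x hx => hsub hx
    have hchord : ∀ x ∈ K, ∀ y ∈ K, Collinear ℝ ({O, x, y} : Set E2) → dist x y ≤ δ := by
      intro x hx y hy hcol
      obtain ⟨v, hv⟩ := (collinear_iff_of_mem (Set.mem_insert O {x, y})).1 hcol
      obtain ⟨rx, hrx⟩ := hv x (by simp)
      obtain ⟨ry, hry⟩ := hv y (by simp)
      rw [vadd_eq_add] at hrx hry
      have hxA₁ : ⟪x - A₁, ν⟫ = rx * ⟪v, ν⟫ - τ := by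
        have e : x - A₁ = rx • v - τ • ν := by rw [hrx, hOdef]; abel
        rw [e, inner_sub_left, real_inner_smul_left, real_inner_smul_left, hννinner, mul_one]
      have hyA₁ : ⟪y - A₁, ν⟫ = ry * ⟪v, ν⟫ - τ := by
        have e : y - A₁ = ry • v - τ • ν := by rw [hry, hOdef]; abel
        rw [e, inner_sub_left, real_inner_smul_left, real_inner_smul_left, hννinner, mul_one]
      have hxτ : τ ≤ rx * ⟪v, ν⟫ := by have := hKhalf x hx; linarith only [this, hxA₁]
      have hyτ : τ ≤ ry * ⟪v, ν⟫ := by have := hKhalf y hy; linarith only [this, hyA₁]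
      have hxO : x - O = rx • v := by rw [hrx]; abel
      have hyO : y - O = ry • v := by rw [hry]; abel
      have hxlow : τ ≤ ‖x - O‖ := by
        have h5 : ⟪x - O, ν⟫ ≤ ‖x - O‖ := by
          have := real_inner_le_norm (x - O) ν
          rwa [hνnorm, mul_one] at this
        have h6 : ⟪x - O, ν⟫ = rx * ⟪v, ν⟫ := by rw [hxO, real_inner_smul_left]
        linarith
      have hylow : τ ≤ ‖y - O‖ := by
        have h5 : ⟪y - O, ν⟫ ≤ ‖y - O‖ := by
          have := real_inner_le_norm (y - O) ν
          rwa [hνnorm, mul_one] at this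
        have h6 : ⟪y - O, ν⟫ = ry * ⟪v, ν⟫ := by rw [hyO, real_inner_smul_left]
        linarith
      have hxhigh : ‖x - O‖ ≤ τ + δ := by
        have := hKball hx
        rw [mem_closedBall, dist_eq_norm] at this
        exact this
      have hyhigh : ‖y - O‖ ≤ τ + δ := by
        have := hKball hy
        rw [mem_closedBall, dist_eq_norm] at this
        exact this
      have hprod : 0 < rx * ry := prod_pos hτpos hxτ hyτ
      have hxyn : dist x y = |rx - ry| * ‖v‖ := by
        have e : x - y = (rx - ry) • v := by rw [hrx, hry, sub_smul]; abel
        rw [dist_eq_norm, e, norm_smul, Real.norm_eq_abs]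
      have hnxv : ‖x - O‖ = |rx| * ‖v‖ := by rw [hxO, norm_smul, Real.norm_eq_abs]
      have hnyv : ‖y - O‖ = |ry| * ‖v‖ := by rw [hyO, norm_smul, Real.norm_eq_abs]
      rw [hxyn]
      rcases lt_trichotomy rx 0 with hrx0 | hrx0 | hrx0
      · have hry0 : ry < 0 := by
          by_contra h8
          push_neg at h8
          have := mul_nonneg (neg_nonneg.2 hrx0.le) h8
          linarith only [hprod, this]
        have e1 : |rx| = -rx := abs_of_neg hrx0
        have e2 : |ry| = -ry := abs_of_neg hry0
        rw [e1] at hnxv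
        rw [e2] at hnyv
        rcases le_total rx ry with h7 | h7
        · rw [abs_of_nonpos (by linarith only [h7] : rx - ry ≤ 0)]
          linarith only [hnxv, hnyv, hxhigh, hylow,
            (by ring : -(rx - ry) * ‖v‖ = -rx * ‖v‖ - -ry * ‖v‖)]
        · rw [abs_of_nonneg (by linarith only [h7] : 0 ≤ rx - ry)]
          linarith only [hnxv, hnyv, hyhigh, hxlow,
            (by ring : (rx - ry) * ‖v‖ = -ry * ‖v‖ - -rx * ‖v‖)]
      · exfalso
        rw [hrx0, zero_mul] at hprod
        exact lt_irrefl _ hprod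
      · have hry0 : 0 < ry := by
          by_contra h8
          push_neg at h8
          have := mul_nonneg hrx0.le (neg_nonneg.2 h8)
          linarith only [hprod, this]
        have e1 : |rx| = rx := abs_of_pos hrx0
        have e2 : |ry| = ry := abs_of_pos hry0
        rw [e1] at hnxv
        rw [e2] at hnyv
        rcases le_total rx ry with h7 | h7
        · rw [abs_of_nonpos (by linarith only [h7] : rx - ry ≤ 0)]
          linarith only [hnxv, hnyv, hyhigh, hxlow,
            (by ring : -(rx - ry) * ‖v‖ = ry * ‖v‖ - rx * ‖v‖)]
        · rw [abs_of_nonneg (by linarith only [h7] : 0 ≤ rx - ry)]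
          linarith only [hnxv, hnyv, hxhigh, hylow,
            (by ring : (rx - ry) * ‖v‖ = rx * ‖v‖ - ry * ‖v‖)]
    have hcolalt : Collinear ℝ ({O, A, A₁} : Set E2) := by
      have h9 : ((τ + δ) / δ) • (A₁ -ᵥ A) = O - A := by
        rw [vsub_eq_sub]
        have e : A₁ - A = -(δ • ν) := by rw [hA₁A]; abel
        rw [e, hOA, smul_neg, smul_smul, div_mul_cancel₀ _ (ne_of_gt hδpos)]
      have hOline : O ∈ line[ℝ, A, A₁] := by
        have h10 : (O - A) +ᵥ A ∈ line[ℝ, A, A₁] :=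
          vadd_left_mem_affineSpan_pair.2 ⟨(τ + δ) / δ, h9⟩
        simpa [vadd_eq_add, sub_add_cancel] using h10
      exact collinear_insert_of_mem_affineSpan_pair hOline
    have hmemδ : δ ∈ {d : ℝ | ∃ x ∈ K, ∃ y ∈ K,
        Collinear ℝ ({O, x, y} : Set E2) ∧ d = dist x y} :=
      ⟨A, hAK, A₁, hA₁K, hcolalt, hδdist⟩
    rw [heFn O]
    refine le_antisymm (csSup_le ⟨δ, hmemδ⟩ ?_) (le_csSup (hbdd O) hmemδ)
    rintro d ⟨x, hx, y, hy, hcol, rfl⟩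
    exact hchord x hx y hy hcol
  refine ⟨?_, ?_, ?_⟩
  · -- Part 1
    obtain ⟨O₀, hO₀def⟩ : ∃ p : E2, p = A₁ - (a ^ 2 / δ) • ν := ⟨_, rfl⟩
    have hA₁A' : A₁ = A - δ • ν := by rw [← hAA₁]; abel
    have hc1 : ⟪O₀ - A, C - B⟫ = 0 := by
      have h3 : O₀ - A = (A₁ - A) - (a ^ 2 / δ) • ν := by rw [hO₀def]; abel
      have e : A₁ - A = -(δ • ν) := by rw [hA₁A']; abel
      rw [h3, e, inner_sub_left, inner_neg_left, real_inner_smul_left, real_inner_smul_left,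
        hνCB]
      ring
    have hc2 : ⟪A - B, O₀ - B⟫ ≤ 0 := by
      have hOB : O₀ - B = tA • (C - B) - (a ^ 2 / δ) • ν := by rw [hO₀def, hA₁def]; abel
      rw [hOB, inner_sub_right, real_inner_smul_right, real_inner_smul_right, hinnertA, hABν,
        div_mul_cancel₀ _ (ne_of_gt hδpos)]
      linarith only [mul_le_mul_of_nonneg_right (mul_le_one₀ htA1 htA0 htA1) (sq_nonneg a),
        (by ring : tA * (tA * a ^ 2) = tA * tA * a ^ 2)]
    have hc3 : ⟪A - C, O₀ - C⟫ ≤ 0 := by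
      have hOC : O₀ - C = (tA • (C - B) - (C - B)) - (a ^ 2 / δ) • ν := by
        rw [hO₀def, hA₁def]; abel
      rw [hOC, inner_sub_right, inner_sub_right, real_inner_smul_right, real_inner_smul_right,
        hinnerACCB, hACν, div_mul_cancel₀ _ (ne_of_gt hδpos)]
      linarith only [mul_le_mul_of_nonneg_right (mul_le_of_le_one_left htA0 htA1) (sq_nonneg a),
        mul_nonneg htA0 (sq_nonneg a),
        (by ring : tA * (tA * a ^ 2) = tA * tA * a ^ 2)]
    have hkey := key O₀ hc1 hc2 hc3
    refine le_antisymm ?_ (le_ciInf lb)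
    have hbb : BddBelow (Set.range fun O : E2 => eFn K O) := by
      refine ⟨δ, ?_⟩
      rintro z ⟨O, rfl⟩
      exact lb O
    exact le_of_le_of_eq (ciInf_le hbb O₀) hkey
  · -- Part 2
    have hbdds : ∀ u : E2, ‖u‖ = 1 →
        BddAbove ((fun x => ⟪x, u⟫) '' K) ∧ BddBelow ((fun x => ⟪x, u⟫) '' K) := by
      intro u hu
      constructor
      · refine ⟨⟪A, u⟫ + R, ?_⟩
        rintro z ⟨x, hx, rfl⟩
        have h2 : ⟪x - A, u⟫ ≤ ‖x - A‖ * ‖u‖ := real_inner_le_norm _ _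
        have h3 : ‖x - A‖ ≤ R := by
          have := hball hx
          rwa [mem_closedBall, dist_eq_norm] at this
        have h4 : ⟪x - A, u⟫ = ⟪x, u⟫ - ⟪A, u⟫ := inner_sub_left _ _ _
        rw [hu, mul_one] at h2
        show ⟪x, u⟫ ≤ ⟪A, u⟫ + R
        linarith only [h2, h3, h4]
      · refine ⟨⟪A, u⟫ - R, ?_⟩
        rintro z ⟨x, hx, rfl⟩
        have h2 : ⟪A - x, u⟫ ≤ ‖A - x‖ * ‖u‖ := real_inner_le_norm _ _
        have h3 : ‖A - x‖ ≤ R := by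
          have := hball hx
          rw [mem_closedBall, dist_eq_norm] at this
          rwa [norm_sub_rev]
        have h4 : ⟪A - x, u⟫ = ⟪A, u⟫ - ⟪x, u⟫ := inner_sub_left _ _ _
        rw [hu, mul_one] at h2
        show ⟪A, u⟫ - R ≤ ⟪x, u⟫
        linarith only [h2, h3, h4]
    have hwfn : ∀ u : E2, widthFn K u =
        sSup ((fun x => ⟪x, u⟫) '' K) - sInf ((fun x => ⟪x, u⟫) '' K) := fun u => rfl
    have wlow : ∀ u : E2, ‖u‖ = 1 → δ ≤ widthFn K u := by
      intro u hu
      obtain ⟨Ju, hJudef⟩ : ∃ j : E2,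
          j = (WithLp.equiv 2 (Fin 2 → ℝ)).symm ![-(u 1), u 0] := ⟨_, rfl⟩
      have hJ0 : Ju 0 = -(u 1) := by rw [hJudef]; rfl
      have hJ1 : Ju 1 = u 0 := by rw [hJudef]; rfl
      have hu2 : u 0 ^ 2 + u 1 ^ 2 = 1 := by rw [← normsq, hu]; norm_num
      have hJn2 : ‖Ju‖ ^ 2 = 1 := by rw [normsq, hJ0, hJ1]; linear_combination hu2
      have hJnorm : ‖Ju‖ = 1 :=
        le_antisymm (sq_le_imp (norm_nonneg Ju) zero_le_one
            (by rw [hJn2]; norm_num : ‖Ju‖ ^ 2 ≤ (1:ℝ) ^ 2))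
          (sq_le_imp zero_le_one (norm_nonneg Ju)
            (by rw [hJn2]; norm_num : (1:ℝ) ^ 2 ≤ ‖Ju‖ ^ 2))
      obtain ⟨hbddA, hbddB⟩ := hbdds u hu
      have hwub : ∀ X, X ∈ K → ∀ Y, Y ∈ K → ⟪X - Y, u⟫ ≤ widthFn K u := by
        intro X hX Y hY
        have h5 : ⟪X, u⟫ ≤ sSup ((fun x => ⟪x, u⟫) '' K) := le_csSup hbddA ⟨X, hX, rfl⟩
        have h6 : sInf ((fun x => ⟪x, u⟫) '' K) ≤ ⟪Y, u⟫ := csInf_le hbddB ⟨Y, hY, rfl⟩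
        have h7 : ⟪X - Y, u⟫ = ⟪X, u⟫ - ⟪Y, u⟫ := inner_sub_left _ _ _
        rw [hwfn u]
        linarith only [h5, h6, h7]
      have hw0 : 0 ≤ widthFn K u := by
        have := hwub A hAK A hAK
        rw [sub_self] at this
        simpa using this
      have habs : ∀ X, X ∈ K → ∀ Y, Y ∈ K → |⟪X - Y, u⟫| ≤ widthFn K u := by
        intro X hX Y hY
        rw [abs_le]
        refine ⟨?_, hwub X hX Y hY⟩
        have h8 := hwub Y hY X hX
        have e : ⟪Y - X, u⟫ = -⟪X - Y, u⟫ := by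
          rw [← inner_neg_left]
          congr 1
          abel
        rw [e] at h8
        linarith only [h8]
      have hqabs : ∀ X Y : E2, |⟪X - Y, Ju⟫| ≤ dist X Y := by
        intro X Y
        have := abs_real_inner_le_norm (X - Y) Ju
        rwa [hJnorm, mul_one, ← dist_eq_norm] at this
      have hid : ⟪B - A, u⟫ * ⟪C - A, Ju⟫ - ⟪C - A, u⟫ * ⟪B - A, Ju⟫ =
          dt (B - A) (C - A) := by
        simp only [inner2, hJ0, hJ1, e2sub_apply, dt]
        linear_combination ((B 0 - A 0) * (C 1 - A 1) - (B 1 - A 1) * (C 0 - A 0)) * hu2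
      have harea2 : (δ * a) ^ 2 = dt (B - A) (C - A) ^ 2 := by
        rw [← hsqeq1, ← hδa]; ring
      have i1 : |⟪B - A, u⟫| ≤ widthFn K u := habs B hBK A hAK
      have i2 : |⟪C - A, u⟫| ≤ widthFn K u := habs C hCK A hAK
      have i3 : |⟪B - A, u⟫ - ⟪C - A, u⟫| ≤ widthFn K u := by
        have e : ⟪B - A, u⟫ - ⟪C - A, u⟫ = ⟪B - C, u⟫ := by
          rw [← inner_sub_left]
          congr 1
          abel
        rw [e]
        exact habs B hBK C hCK
      have j1 : |⟪B - A, Ju⟫| ≤ a := by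
        refine le_trans (hqabs B A) ?_
        calc dist B A = c := by rw [hcdef, dist_comm]
          _ ≤ a := hca
      have j2 : |⟪C - A, Ju⟫| ≤ a := by
        refine le_trans (hqabs C A) ?_
        calc dist C A = b := by rw [hbdef, dist_comm]
          _ ≤ a := hba
      have j3 : |⟪B - A, Ju⟫ - ⟪C - A, Ju⟫| ≤ a := by
        have e : ⟪B - A, Ju⟫ - ⟪C - A, Ju⟫ = ⟪B - C, Ju⟫ := by
          rw [← inner_sub_left]
          congr 1
          abel
        rw [e]
        refine le_trans (hqabs B C) ?_
        rw [hadef]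
      have k1 := width_ineq hw0 (le_of_lt ha0) i1 i2 i3 j1 j2 j3
      have k2 := width_ineq hw0 (le_of_lt ha0) i2 i1 (by rwa [abs_sub_comm] at i3) j2 j1
        (by rwa [abs_sub_comm] at j3)
      have hD : |dt (B - A) (C - A)| ≤ widthFn K u * a := by
        rw [abs_le]
        constructor
        · linarith only [k2, hid]
        · linarith only [k1, hid]
      exact area_le hδpos ha0 hw0 harea2 hD
    have hwν : widthFn K ν = δ := by
      obtain ⟨hbddA, hbddB⟩ := hbdds ν hνnorm
      have hupper : ∀ x ∈ K, ⟪x, ν⟫ ≤ ⟪A, ν⟫ := by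
        have hlin : IsLinearMap ℝ (fun x : E2 => ⟪x, ν⟫) :=
          ⟨fun p q => inner_add_left p q ν, fun r p => real_inner_smul_left p ν r⟩
        have hsub : K ⊆ {x : E2 | ⟪x, ν⟫ ≤ ⟪A, ν⟫} := by
          rw [hKdef]
          apply convexHull_min ?_ (convex_halfSpace_le hlin _)
          intro z hz
          simp only [Set.mem_insert_iff, Set.mem_singleton_iff] at hz
          rcases hz with h | h | h <;> rw [h] <;> simp only [Set.mem_setOf_eq]
          · exact le_refl _
          · have := hABν
            rw [inner_sub_left] at this
            linarith only [this, hδpos]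
          · have := hACν
            rw [inner_sub_left] at this
            linarith only [this, hδpos]
        exact fun x hx => hsub hx
      have hlower : ∀ x ∈ K, ⟪B, ν⟫ ≤ ⟪x, ν⟫ := by
        have hlin : IsLinearMap ℝ (fun x : E2 => ⟪x, ν⟫) :=
          ⟨fun p q => inner_add_left p q ν, fun r p => real_inner_smul_left p ν r⟩
        have hsub : K ⊆ {x : E2 | ⟪B, ν⟫ ≤ ⟪x, ν⟫} := by
          rw [hKdef]
          apply convexHull_min ?_ (convex_halfSpace_ge hlin _)
          intro z hz
          simp only [Set.mem_insert_iff, Set.mem_singleton_iff] at hz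
          rcases hz with h | h | h <;> rw [h] <;> simp only [Set.mem_setOf_eq]
          · have := hABν
            rw [inner_sub_left] at this
            linarith only [this, hδpos]
          · exact le_refl _
          · have := hCBν
            rw [inner_sub_left] at this
            linarith only [this]
        exact fun x hx => hsub hx
      have h5 : sSup ((fun x => ⟪x, ν⟫) '' K) = ⟪A, ν⟫ := by
        refine le_antisymm (csSup_le ⟨⟪A, ν⟫, A, hAK, rfl⟩ ?_) (le_csSup hbddA ⟨A, hAK, rfl⟩)
        rintro z ⟨x, hx, rfl⟩
        exact hupper x hx
      have h6 : sInf ((fun x => ⟪x, ν⟫) '' K) = ⟪B, ν⟫ := by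
        refine le_antisymm (csInf_le hbddB ⟨B, hBK, rfl⟩) (le_csInf ⟨⟪B, ν⟫, B, hBK, rfl⟩ ?_)
        rintro z ⟨x, hx, rfl⟩
        exact hlower x hx
      rw [hwfn ν, h5, h6]
      have := hABν
      rw [inner_sub_left] at this
      linarith only [this]
    haveI : Nonempty (sphere (0 : E2) 1) := ⟨⟨ν, mem_sphere_zero_iff_norm.2 hνnorm⟩⟩
    refine le_antisymm ?_ (le_ciInf fun u => wlow u (mem_sphere_zero_iff_norm.1 u.2))
    have hbb : BddBelow (Set.range fun u : sphere (0 : E2) 1 => widthFn K u) := by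
      refine ⟨δ, ?_⟩
      rintro z ⟨u, rfl⟩
      exact wlow u (mem_sphere_zero_iff_norm.1 u.2)
    exact le_of_le_of_eq (ciInf_le hbb ⟨ν, mem_sphere_zero_iff_norm.2 hνnorm⟩) hwν
  · -- Part 3
    intro O hO hang1 hang2
    exact key O hO (angle_ge_imp_inner_nonpos hABne hang1)
      (angle_ge_imp_inner_nonpos hACne hang2)
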